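/- arXiv:2202.05100 — 4 statements merged into one kernel-verified Lean document; each statement's English description precedes it below -/
import Mathlib

section
/- For any sequence of actions A_1,...,A_T taking values in a finite set 𝒜, define N_t(a) = max(1, Σ_{s=1}^t 1{A_s = a}). Then for any 1 ≤ t < t' ≤ T, Σ_{s=t}^{t'} 1/√(N_{s-1}(A_s)) ≤ √(8|𝒜|(t'−t)). -/
open Finset


lemma key_step (m : ℕ) (hm : 1 ≤ m) :
    Real.sqrt (4*m - 3) + 1 / Real.sqrt m ≤ Real.sqrt (4*m + 1) := by
  have hm1 : (1:ℝ) ≤ (m:ℝ) := by exact_mod_cast hm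
  set x := Real.sqrt (4*m - 3) with hx
  set y := Real.sqrt m with hy
  set z := Real.sqrt (4*m + 1) with hz
  have hx2 : x^2 = 4*m - 3 := Real.sq_sqrt (by linarith)
  have hy2 : y^2 = m := Real.sq_sqrt (by linarith)
  have hz2 : z^2 = 4*m + 1 := Real.sq_sqrt (by linarith)
  have hxn : 0 ≤ x := Real.sqrt_nonneg _
  have hyn : 1 ≤ y := by nlinarith [Real.sqrt_nonneg (m:ℝ)]
  have hzn : 0 ≤ z := Real.sqrt_nonneg _
  have hy0 : 0 < y := by linarith
  have key : x * y + 1 ≤ z * y := by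
    have h1 : (x*y+1)^2 ≤ (z*y)^2 := by
      nlinarith [sq_nonneg (x*y - (2*m - 1)), mul_nonneg hxn hy0.le]
    nlinarith [mul_nonneg hzn hy0.le, mul_nonneg hxn hy0.le]
  calc x + 1/y = (x*y+1)/y := by field_simp
  _ ≤ (z*y)/y := by gcongr
  _ = z := by field_simp

lemma sum_inv_sqrt (m : ℕ) (hm : 1 ≤ m) :
    ∑ k ∈ Finset.Icc 1 m, (1:ℝ)/Real.sqrt ((max 1 (k-1) : ℕ) : ℝ) ≤ Real.sqrt (4*m - 3) := by
  induction m, hm using Nat.le_induction with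
  | base => norm_num
  | succ m hm ih =>
    rw [Finset.sum_Icc_succ_top (by omega : 1 ≤ m + 1)]
    have h1 : ((max 1 (m + 1 - 1) : ℕ) : ℝ) = (m : ℝ) := by
      have : max 1 (m + 1 - 1) = m := by omega
      rw [this]
    rw [h1]
    have := key_step m hm
    have hcast : (4 * (↑(m+1):ℝ) - 3) = 4*(m:ℝ) + 1 := by push_cast; ring
    rw [hcast]
    linarith


/-- Accumulated action-count bound: for actions `A_s` in a finite set with
counts `N_s a = max 1 (#{s' ≤ s : A_{s'} = a})`, the sum of inverse square-root
counts over a window is at most `√(8|𝒜|(t'−t))`. -/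
theorem accumulated_actions {α : Type*} [Fintype α] [DecidableEq α]
    (T : ℕ) (A : ℕ → α) (N : ℕ → α → ℕ)
    (hN : ∀ s a, N s a = max 1 (∑ j ∈ Finset.Icc 1 s, if A j = a then 1 else 0))
    (t t' : ℕ) (ht : 1 ≤ t) (htt' : t < t') (ht' : t' ≤ T) :
    ∑ s ∈ Finset.Icc t t', (1 : ℝ) / Real.sqrt (N (s - 1) (A s)) ≤
      Real.sqrt (8 * (Fintype.card α : ℝ) * ((t' : ℝ) - (t : ℝ))) := by
  classical
  set f : ℕ → ℝ := fun k => 1 / Real.sqrt ((max 1 (k - 1) : ℕ) : ℝ) with hf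
  have hf_nonneg : ∀ k, 0 ≤ f k := fun k => by positivity
  set S := Finset.Icc t t' with hSdef
  set ca : α → ℕ → ℕ := fun a s => ((Finset.Icc t s).filter (fun j => A j = a)).card with hca
  set n : α → ℕ := fun a => (S.filter (fun s => A s = a)).card with hndef
  set B := S.image A with hB
  -- Step 1
  have step1 : ∀ s ∈ S, (1:ℝ)/Real.sqrt (N (s-1) (A s)) ≤ f (ca (A s) s) := by
    intro s hs
    have hts : t ≤ s := (Finset.mem_Icc.mp hs).1
    have hs1 : 1 ≤ s := le_trans ht hts
    -- ca (A s) s = count on Icc t (s-1) + 1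
    have hsplit : ca (A s) s = ((Finset.Icc t (s-1)).filter (fun j => A j = A s)).card + 1 := by
      have hins : Finset.Icc t s = insert s (Finset.Icc t (s-1)) := by
        have h2 : s - 1 + 1 = s := by omega
        nth_rewrite 1 [← h2]
        rw [← Finset.insert_Icc_right_eq_Icc_add_one (by omega : t ≤ (s-1)+1), h2]
      have hnotmem : s ∉ Finset.Icc t (s-1) := by
        simp [Finset.mem_Icc]; omega
      simp only [hca, hins, Finset.filter_insert, if_pos rfl, if_true]
      rw [Finset.card_insert_of_notMem (fun h => hnotmem (Finset.mem_of_mem_filter s h))]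
    have hge : max 1 (ca (A s) s - 1) ≤ N (s-1) (A s) := by
      rw [hN]
      apply max_le_max le_rfl
      rw [hsplit]
      simp only [Nat.add_sub_cancel]
      rw [Finset.sum_boole]
      norm_num
      apply Finset.card_le_card
      apply Finset.filter_subset_filter
      apply Finset.Icc_subset_Icc_left ht
    have hpos : (0:ℝ) < Real.sqrt ((max 1 (ca (A s) s - 1) : ℕ) : ℝ) := by
      apply Real.sqrt_pos.mpr
      have : 1 ≤ max 1 (ca (A s) s - 1) := le_max_left _ _
      exact_mod_cast Nat.lt_of_lt_of_le Nat.zero_lt_one this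
    exact one_div_le_one_div_of_le hpos (Real.sqrt_le_sqrt (by exact_mod_cast hge))
  have hsum1 : ∑ s ∈ S, (1:ℝ)/Real.sqrt (N (s-1) (A s)) ≤ ∑ s ∈ S, f (ca (A s) s) :=
    Finset.sum_le_sum step1
  -- Step 2: fiberwise
  have hfib : ∑ s ∈ S, f (ca (A s) s) = ∑ a ∈ B, ∑ s ∈ S.filter (fun s => A s = a), f (ca a s) := by
    rw [← Finset.sum_fiberwise_of_maps_to (fun s hs => Finset.mem_image_of_mem A hs)]
    apply Finset.sum_congr rfl
    intro a _
    apply Finset.sum_congr rfl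
    intro s hs
    rw [(Finset.mem_filter.mp hs).2]
  -- Step 3: per-action bound
  have hna1 : ∀ a ∈ B, 1 ≤ n a := by
    intro a ha
    obtain ⟨s, hsS, rfl⟩ := Finset.mem_image.mp ha
    exact Finset.card_pos.mpr ⟨s, Finset.mem_filter.mpr ⟨hsS, rfl⟩⟩
  have step3 : ∀ a ∈ B, ∑ s ∈ S.filter (fun s => A s = a), f (ca a s) ≤ Real.sqrt (4 * (n a) - 3) := by
    intro a ha
    set Sa := S.filter (fun s => A s = a) with hSa
    have hmono : ∀ s ∈ Sa, ∀ s'' ∈ Sa, s < s'' → ca a s < ca a s'' := by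
      intro s hs s'' hs'' hlt
      apply Finset.card_lt_card
      rw [Finset.ssubset_iff_of_subset
        (Finset.filter_subset_filter _ (Finset.Icc_subset_Icc_right hlt.le))]
      refine ⟨s'', ?_, ?_⟩
      · have h1 := Finset.mem_filter.mp hs''
        have h2 := Finset.mem_Icc.mp h1.1
        exact Finset.mem_filter.mpr ⟨Finset.mem_Icc.mpr ⟨h2.1, le_rfl⟩, h1.2⟩
      · intro hmem
        have := (Finset.mem_Icc.mp (Finset.mem_of_mem_filter s'' hmem)).2
        omega
    have hinj : ∀ x ∈ Sa, ∀ y ∈ Sa, ca a x = ca a y → x = y := by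
      intro x hx y hy hxy
      by_contra hne
      rcases lt_or_gt_of_ne hne with h | h
      · exact absurd hxy (Nat.ne_of_lt (hmono x hx y hy h))
      · exact absurd hxy.symm (Nat.ne_of_lt (hmono y hy x hx h))
    have hsub : Sa.image (ca a) ⊆ Finset.Icc 1 (n a) := by
      intro k hk
      obtain ⟨s, hs, rfl⟩ := Finset.mem_image.mp hk
      have h1 := Finset.mem_filter.mp hs
      have h2 := Finset.mem_Icc.mp h1.1
      refine Finset.mem_Icc.mpr ⟨?_, ?_⟩
      · exact Finset.card_pos.mpr ⟨s, Finset.mem_filter.mpr ⟨Finset.mem_Icc.mpr ⟨h2.1, le_rfl⟩, h1.2⟩⟩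
      · apply Finset.card_le_card
        apply Finset.filter_subset_filter
        exact Finset.Icc_subset_Icc_right h2.2
    calc ∑ s ∈ Sa, f (ca a s) = ∑ k ∈ Sa.image (ca a), f k := (Finset.sum_image hinj).symm
    _ ≤ ∑ k ∈ Finset.Icc 1 (n a), f k :=
        Finset.sum_le_sum_of_subset_of_nonneg hsub (fun k _ _ => hf_nonneg k)
    _ ≤ Real.sqrt (4 * (n a) - 3) := sum_inv_sqrt (n a) (hna1 a ha)
  -- Step 4: Cauchy-Schwarz + counting
  have hcardS : S.card = t' - t + 1 := by rw [hSdef, Nat.card_Icc]; omega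
  have hsum_n : ∑ a ∈ B, n a = S.card :=
    (Finset.card_eq_sum_card_fiberwise (fun s hs => Finset.mem_image_of_mem A hs)).symm
  have hBpos : 1 ≤ B.card :=
    Finset.card_pos.mpr ⟨A t, Finset.mem_image_of_mem A (Finset.mem_Icc.mpr ⟨le_rfl, htt'.le⟩)⟩
  have hBle : B.card ≤ Fintype.card α := Finset.card_le_univ B
  set d := t' - t with hd
  have hd1 : 1 ≤ d := by omega
  have hdR : ((t' : ℝ) - (t : ℝ)) = (d : ℝ) := by rw [hd, Nat.cast_sub htt'.le]
  have CS : (∑ a ∈ B, Real.sqrt (4*(n a : ℝ) - 3))^2 ≤ (B.card : ℝ) * ∑ a ∈ B, (4*(n a:ℝ) - 3) := by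
    have h := Finset.sum_mul_sq_le_sq_mul_sq B (fun _ => (1:ℝ)) (fun a => Real.sqrt (4*(n a : ℝ) - 3))
    simp only [one_mul, one_pow] at h
    have hrw : ∑ a ∈ B, (Real.sqrt (4*(n a : ℝ) - 3))^2 = ∑ a ∈ B, (4*(n a:ℝ) - 3) := by
      apply Finset.sum_congr rfl
      intro a ha
      apply Real.sq_sqrt
      have := hna1 a ha
      have : (1:ℝ) ≤ (n a : ℝ) := by exact_mod_cast this
      linarith
    rw [hrw] at h
    calc (∑ a ∈ B, Real.sqrt (4*(n a : ℝ) - 3))^2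
        ≤ (∑ a ∈ B, (1:ℝ)^2) * ∑ a ∈ B, (4*(n a:ℝ) - 3) := by
          simpa using h
    _ = (B.card : ℝ) * ∑ a ∈ B, (4*(n a:ℝ) - 3) := by simp [Finset.sum_const]
  have hsumx : ∑ a ∈ B, (4*(n a:ℝ) - 3) = 4 * ((d:ℝ) + 1) - 3 * B.card := by
    rw [Finset.sum_sub_distrib, ← Finset.mul_sum, Finset.sum_const]
    have : (∑ a ∈ B, (n a : ℝ)) = ((∑ a ∈ B, n a : ℕ) : ℝ) := by push_cast; ring
    rw [this, hsum_n, hcardS]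
    push_cast
    ring
  have hfinal2 : (B.card : ℝ) * ∑ a ∈ B, (4*(n a:ℝ) - 3) ≤ 8 * (Fintype.card α : ℝ) * (d : ℝ) := by
    rw [hsumx]
    have h1 : (1:ℝ) ≤ (B.card : ℝ) := by exact_mod_cast hBpos
    have h2 : (B.card : ℝ) ≤ (Fintype.card α : ℝ) := by exact_mod_cast hBle
    have h3 : (1:ℝ) ≤ (d : ℝ) := by exact_mod_cast hd1
    have hx : 4 * ((d:ℝ) + 1) - 3 * B.card ≤ 8 * (d:ℝ) := by nlinarith
    have hx0 : 0 ≤ 4 * ((d:ℝ) + 1) - 3 * B.card := by nlinarith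
    nlinarith
  have hsqrt : ∑ a ∈ B, Real.sqrt (4*(n a : ℝ) - 3) ≤ Real.sqrt (8 * (Fintype.card α : ℝ) * (d : ℝ)) := by
    have hnn : 0 ≤ ∑ a ∈ B, Real.sqrt (4*(n a : ℝ) - 3) :=
      Finset.sum_nonneg (fun a _ => Real.sqrt_nonneg _)
    rw [show (8 * (Fintype.card α : ℝ) * (d : ℝ)) = (8 * (Fintype.card α : ℝ) * (d : ℝ)) from rfl]
    exact (Real.le_sqrt hnn (by positivity)).mpr (by calc (∑ a ∈ B, Real.sqrt (4*(n a : ℝ) - 3))^2 ≤ (B.card : ℝ) * ∑ a ∈ B, (4*(n a:ℝ) - 3) := CS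
      _ ≤ 8 * (Fintype.card α : ℝ) * (d : ℝ) := hfinal2)
  rw [hdR]
  calc ∑ s ∈ S, (1:ℝ)/Real.sqrt (N (s-1) (A s)) ≤ ∑ s ∈ S, f (ca (A s) s) := hsum1
  _ = ∑ a ∈ B, ∑ s ∈ S.filter (fun s => A s = a), f (ca a s) := hfib
  _ ≤ ∑ a ∈ B, Real.sqrt (4*(n a : ℝ) - 3) := Finset.sum_le_sum step3
  _ ≤ Real.sqrt (8 * (Fintype.card α : ℝ) * (d : ℝ)) := hsqrt
end

section
/- Let p be a probability distribution on a finite set Z and p̂_n the empirical (MLE) distribution from an i.i.d. sample X_1,...,X_n from p, i.e., p̂_n(z) = (1/n)Σ_{t=1}^n 1{X_t = z}. For any ε, δ > 0, if n ≥ max(|Z|/ε², (2/ε²)·log(2/δ)), then P[ (1/2)Σ_{z∈Z} |p̂_n(z) − p(z)| > ε ] ≤ δ. -/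
open MeasureTheory ProbabilityTheory Finset

lemma bern_log_mgf_le {q : ℝ} (h0 : 0 ≤ q) (h1 : q ≤ 1) (s : ℝ) :
    Real.log (1 - q + q * Real.exp s) ≤ q * s + s ^ 2 / 8 := by
  set φ : ℝ → ℝ := fun t => 1 - q + q * Real.exp t with hφdef
  have φpos : ∀ t, 0 < φ t := by
    intro t
    rcases lt_or_eq_of_le h1 with h | h
    · have : 0 ≤ q * Real.exp t := mul_nonneg h0 (Real.exp_pos t).le
      simp only [hφdef]; linarith
    · subst h; simp only [hφdef]; have := Real.exp_pos t; linarith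
  set g : ℝ → ℝ := fun t => q * t + t ^ 2 / 8 - Real.log (φ t) with hgdef
  set g' : ℝ → ℝ := fun t => q + t / 4 - q * Real.exp t / φ t with hg'def
  have hφd : ∀ t, HasDerivAt φ (q * Real.exp t) t := by
    intro t
    exact ((Real.hasDerivAt_exp t).const_mul q).const_add (1 - q)
  have hg : ∀ t, HasDerivAt g (g' t) t := by
    intro t
    have hlog : HasDerivAt (fun t => Real.log (φ t)) (q * Real.exp t / φ t) t :=
      (hφd t).log (φpos t).ne'
    have h1' : HasDerivAt (fun t : ℝ => q * t + t ^ 2 / 8) (q + 2 * t / 8) t := by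
      have := ((hasDerivAt_pow 2 t).div_const 8).const_add (q * t)
      have h2 : HasDerivAt (fun t : ℝ => q * t) q t := by
        simpa using (hasDerivAt_id t).const_mul q
      exact (h2.add ((hasDerivAt_pow 2 t).div_const 8)).congr_deriv (by norm_num)
    have := h1'.sub hlog
    refine this.congr_deriv ?_
    simp only [hg'def]; ring
  have hg' : ∀ t, HasDerivAt g' (1 / 4 - (q * Real.exp t * φ t - q * Real.exp t * (q * Real.exp t)) / (φ t) ^ 2) t := by
    intro t
    have hdiv : HasDerivAt (fun t => q * Real.exp t / φ t)
        ((q * Real.exp t * φ t - q * Real.exp t * (q * Real.exp t)) / (φ t) ^ 2) t :=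
      ((Real.hasDerivAt_exp t).const_mul q).div (hφd t) (φpos t).ne'
    have hlin : HasDerivAt (fun t : ℝ => q + t / 4) (1 / 4) t := by
      simpa using ((hasDerivAt_id t).div_const 4).const_add q
    exact hlin.sub hdiv
  have hg'nonneg : ∀ t, 0 ≤ 1 / 4 - (q * Real.exp t * φ t - q * Real.exp t * (q * Real.exp t)) / (φ t) ^ 2 := by
    intro t
    rw [sub_nonneg, div_le_iff₀ (pow_pos (φpos t) 2)]
    have hb : (0:ℝ) ≤ q * Real.exp t := mul_nonneg h0 (Real.exp_pos t).le
    have ha : (0:ℝ) ≤ 1 - q := by linarith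
    have hphi : φ t = (1 - q) + q * Real.exp t := rfl
    nlinarith [sq_nonneg ((1 - q) - q * Real.exp t)]
  have hg'mono : Monotone g' := by
    have hdiff : Differentiable ℝ g' := fun t => (hg' t).differentiableAt
    apply monotone_of_deriv_nonneg hdiff
    intro t
    rw [(hg' t).deriv]
    exact hg'nonneg t
  have hg'0 : g' 0 = 0 := by
    simp only [hg'def, hφdef]
    simp [Real.exp_zero]
  have hgnonneg : ∀ t, 0 ≤ g t := by
    intro t
    have hg0 : g 0 = 0 := by simp [hgdef, hφdef]
    rcases le_or_gt 0 t with h | h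
    · have : MonotoneOn g (Set.Ici 0) := by
        apply monotoneOn_of_deriv_nonneg (convex_Ici 0)
        · exact fun x _ => (hg x).continuousAt.continuousWithinAt
        · exact fun x _ => (hg x).differentiableAt.differentiableWithinAt
        · intro x hx
          rw [(hg x).deriv]
          have : (0:ℝ) ≤ x := by simpa using interior_subset (s := Set.Ici (0:ℝ)) hx |>.out
          calc (0:ℝ) = g' 0 := hg'0.symm
            _ ≤ g' x := hg'mono this
      have := this (Set.self_mem_Ici) (Set.mem_Ici.mpr h) h
      linarith [hg0 ▸ this]
    · have : AntitoneOn g (Set.Iic 0) := by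
        apply antitoneOn_of_deriv_nonpos (convex_Iic 0)
        · exact fun x _ => (hg x).continuousAt.continuousWithinAt
        · exact fun x _ => (hg x).differentiableAt.differentiableWithinAt
        · intro x hx
          rw [(hg x).deriv]
          have hx0 : x ≤ (0:ℝ) := by simpa using interior_subset (s := Set.Iic (0:ℝ)) hx |>.out
          calc g' x ≤ g' 0 := hg'mono hx0
            _ = 0 := hg'0
      have := this (Set.mem_Iic.mpr h.le) (Set.self_mem_Iic) h.le
      linarith [hg0 ▸ this]
  have := hgnonneg s
  simp only [hgdef] at this
  linarith

lemma bern_mgf_le {q : ℝ} (h0 : 0 ≤ q) (h1 : q ≤ 1) (s : ℝ) :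
    q * Real.exp (s * (1 - q)) + (1 - q) * Real.exp (-(s * q)) ≤ Real.exp (s ^ 2 / 8) := by
  have key := bern_log_mgf_le h0 h1 s
  have φpos : 0 < 1 - q + q * Real.exp s := by
    rcases lt_or_eq_of_le h1 with h | h
    · have : 0 ≤ q * Real.exp s := mul_nonneg h0 (Real.exp_pos s).le
      linarith
    · subst h; have := Real.exp_pos s; linarith
  have h2 : 1 - q + q * Real.exp s ≤ Real.exp (q * s + s ^ 2 / 8) := by
    rw [← Real.exp_log φpos]
    exact Real.exp_le_exp.mpr key
  have h3 : Real.exp (-(s * q)) * (1 - q + q * Real.exp s) ≤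
      Real.exp (-(s * q)) * Real.exp (q * s + s ^ 2 / 8) :=
    mul_le_mul_of_nonneg_left h2 (Real.exp_pos _).le
  rw [← Real.exp_add] at h3
  have heq : -(s * q) + (q * s + s ^ 2 / 8) = s ^ 2 / 8 := by ring
  rw [heq] at h3
  calc q * Real.exp (s * (1 - q)) + (1 - q) * Real.exp (-(s * q))
      = Real.exp (-(s * q)) * (1 - q + q * Real.exp s) := by
        rw [show s * (1 - q) = -(s*q) + s by ring, Real.exp_add]; ring
    _ ≤ Real.exp (s ^ 2 / 8) := h3

lemma chernoff_set {Ω Z : Type*} [MeasurableSpace Ω]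
    [Fintype Z] [DecidableEq Z] [MeasurableSpace Z] [MeasurableSingletonClass Z]
    (μ : Measure Ω) [IsProbabilityMeasure μ]
    (n : ℕ) (X : ℕ → Ω → Z) (hmeas : ∀ t, Measurable (X t))
    (hindep : iIndepFun X μ)
    (A : Finset Z) (q : ℝ) (hq0 : 0 ≤ q) (hq1 : q ≤ 1)
    (hlawA : ∀ t, (μ {ω | X t ω ∈ A}).toReal = q)
    (ε : ℝ) (hε : 0 < ε) :
    (μ {ω | (n:ℝ) * ε ≤ ∑ t ∈ Finset.range n, ((if X t ω ∈ A then (1:ℝ) else 0) - q)}).toReal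
      ≤ Real.exp (-2 * n * ε ^ 2) := by
  classical
  set f : Z → ℝ := fun z => (if z ∈ A then (1:ℝ) else 0) - q with hf
  set Y : ℕ → Ω → ℝ := fun t ω => f (X t ω) with hY
  have hfm : Measurable f := Measurable.of_discrete
  have hYmeas : ∀ t, Measurable (Y t) := fun t => hfm.comp (hmeas t)
  have hYindep : iIndepFun Y μ :=
    hindep.comp (fun _ => f) (fun _ => hfm)
  set s : ℝ := 4 * ε with hs
  have hSmeas : ∀ t, MeasurableSet {ω | X t ω ∈ A} := by
    intro t
    have : {ω | X t ω ∈ A} = X t ⁻¹' (↑A) := rfl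
    rw [this]
    exact hmeas t (Set.Finite.measurableSet A.finite_toSet)
  set e1 : ℝ := Real.exp (s * (1 - q)) with he1
  set e0 : ℝ := Real.exp (-(s * q)) with he0
  have hexp_eq : ∀ t, (fun ω => Real.exp (s * Y t ω)) =
      fun ω => Set.indicator {ω | X t ω ∈ A} (fun _ => e1 - e0) ω + e0 := by
    intro t
    funext ω
    by_cases h : X t ω ∈ A
    · simp [hY, hf, h, Set.indicator_of_mem (show ω ∈ {ω | X t ω ∈ A} from h), he1,
        mul_sub]
    · simp [hY, hf, h, Set.indicator_of_notMem (show ω ∉ {ω | X t ω ∈ A} from h), he0,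
        mul_comm]
  have hint : ∀ t, Integrable (fun ω => Real.exp (s * Y t ω)) μ := by
    intro t
    rw [hexp_eq t]
    exact ((integrable_const (e1 - e0)).indicator (hSmeas t)).add (integrable_const e0)
  have hmgf : ∀ t : ℕ, mgf (Y t) μ s ≤ Real.exp (s ^ 2 / 8) := by
    intro t
    have : mgf (Y t) μ s = q * e1 + (1 - q) * e0 := by
      rw [mgf, hexp_eq t, integral_add ((integrable_const (e1 - e0)).indicator (hSmeas t))
        (integrable_const e0), integral_indicator_const _ (hSmeas t), integral_const,
        probReal_univ]
      rw [measureReal_def, hlawA t]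
      simp [smul_eq_mul]
      ring
    rw [this]
    exact bern_mgf_le hq0 hq1 s
  have hsum_int : Integrable (fun ω => Real.exp (s * (∑ t ∈ Finset.range n, Y t) ω)) μ :=
    hYindep.integrable_exp_mul_sum hYmeas (fun i _ => hint i)
  have hcher := measure_ge_le_exp_mul_mgf (μ := μ) (X := (∑ t ∈ Finset.range n, Y t))
    ((n:ℝ) * ε) (by positivity : (0:ℝ) ≤ s) hsum_int
  have hset : {ω | (n:ℝ) * ε ≤ (∑ t ∈ Finset.range n, Y t) ω} =
      {ω | (n:ℝ) * ε ≤ ∑ t ∈ Finset.range n, ((if X t ω ∈ A then (1:ℝ) else 0) - q)} := by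
    ext ω
    simp [Finset.sum_apply, hY, hf]
  rw [hset] at hcher
  refine hcher.trans ?_
  have hprod : mgf (∑ t ∈ Finset.range n, Y t) μ s ≤ Real.exp (s ^ 2 / 8) ^ n := by
    rw [hYindep.mgf_sum hYmeas]
    calc ∏ t ∈ Finset.range n, mgf (Y t) μ s ≤ ∏ t ∈ Finset.range n, Real.exp (s ^ 2 / 8) :=
          Finset.prod_le_prod (fun i _ => mgf_nonneg) (fun i _ => hmgf i)
      _ = Real.exp (s ^ 2 / 8) ^ n := by rw [Finset.prod_const, Finset.card_range]
  calc Real.exp (-s * ((n:ℝ) * ε)) * mgf (∑ t ∈ Finset.range n, Y t) μ s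
      ≤ Real.exp (-s * ((n:ℝ) * ε)) * Real.exp (s ^ 2 / 8) ^ n :=
        mul_le_mul_of_nonneg_left hprod (Real.exp_pos _).le
    _ = Real.exp (-2 * n * ε ^ 2) := by
        rw [← Real.exp_nat_mul, ← Real.exp_add]
        congr 1
        rw [hs]
        ring

/-- Finite-sample multinomial estimation (Canonne 2020, Theorem 1): if
`n ≥ max(|Z|/ε², (2/ε²)·log(2/δ))`, then the empirical distribution of an i.i.d.
sample from a pmf `p` on a finite set `Z` is within total variation `ε` of `p`
with probability at least `1 − δ`. -/
theorem multinomial_concentration {Ω Z : Type*} [MeasurableSpace Ω]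
    [Fintype Z] [DecidableEq Z] [MeasurableSpace Z] [MeasurableSingletonClass Z]
    (μ : Measure Ω) [IsProbabilityMeasure μ]
    (p : Z → ℝ) (hp0 : ∀ z, 0 ≤ p z) (hp1 : ∑ z, p z = 1)
    (n : ℕ) (X : ℕ → Ω → Z) (hmeas : ∀ t, Measurable (X t))
    (hindep : iIndepFun X μ)
    (hlaw : ∀ t z, (μ {ω | X t ω = z}).toReal = p z)
    (ε δ : ℝ) (hε : 0 < ε) (hδ : 0 < δ)
    (hn : max ((Fintype.card Z : ℝ) / ε ^ 2) ((2 / ε ^ 2) * Real.log (2 / δ)) ≤ n) :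
    (μ {ω | ε < (1 / 2) * ∑ z,
        |(1 / (n : ℝ)) * ∑ t ∈ Finset.range n, (if X t ω = z then (1 : ℝ) else 0) - p z|}).toReal
      ≤ δ := by
  classical
  -- trivial case δ ≥ 1
  rcases le_or_gt 1 δ with hδ1 | hδ1
  · calc (μ _).toReal ≤ (μ Set.univ).toReal :=
          ENNReal.toReal_mono (measure_ne_top μ _) (measure_mono (Set.subset_univ _))
      _ = 1 := by simp
      _ ≤ δ := hδ1
  -- now δ < 1, so n ≥ 1
  have hε2 : (0:ℝ) < ε ^ 2 := by positivity
  have hlog2δ : 0 < Real.log (2 / δ) := Real.log_pos (by rw [lt_div_iff₀ hδ]; linarith)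
  have hnpos : 0 < n := by
    by_contra h
    push_neg at h
    interval_cases n
    have := (le_max_right _ _).trans hn
    simp only [Nat.cast_zero] at this
    nlinarith [mul_pos (div_pos (by norm_num : (0:ℝ) < 2) hε2) hlog2δ]
  have hnR : (0:ℝ) < (n:ℝ) := Nat.cast_pos.mpr hnpos
  have hK : (Fintype.card Z : ℝ) ≤ n * ε ^ 2 := by
    have := (le_max_left ((Fintype.card Z : ℝ) / ε ^ 2) _).trans hn
    rw [div_le_iff₀ hε2] at this
    linarith
  have hL : 2 * Real.log (2 / δ) ≤ n * ε ^ 2 := by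
    have := (le_max_right ((Fintype.card Z : ℝ) / ε ^ 2) _).trans hn
    rw [div_mul_eq_mul_div, div_le_iff₀ hε2] at this
    linarith
  -- notation
  set q : Finset Z → ℝ := fun A => ∑ z ∈ A, p z with hq
  have hq0 : ∀ A, 0 ≤ q A := fun A => Finset.sum_nonneg fun z _ => hp0 z
  have hq1' : ∀ A : Finset Z, q A ≤ 1 := by
    intro A
    rw [← hp1]
    exact Finset.sum_le_sum_of_subset_of_nonneg (Finset.subset_univ A) fun z _ _ => hp0 z
  have hlawA : ∀ (A : Finset Z) (t : ℕ), (μ {ω | X t ω ∈ A}).toReal = q A := by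
    intro A t
    have hset : {ω | X t ω ∈ A} = ⋃ z ∈ A, {ω | X t ω = z} := by
      ext ω; simp
    rw [hset, measure_biUnion_finset]
    · rw [ENNReal.toReal_sum fun z _ => measure_ne_top μ _]
      exact Finset.sum_congr rfl fun z _ => hlaw t z
    · intro a _ b _ hab
      simp only [Function.onFun, Set.disjoint_left]
      intro ω ha hb
      exact hab (ha.symm.trans hb)
    · intro z _
      exact hmeas t (measurableSet_singleton z)
  -- event inclusion
  set E : Finset Z → Set Ω := fun A =>
    {ω | (n:ℝ) * ε ≤ ∑ t ∈ Finset.range n, ((if X t ω ∈ A then (1:ℝ) else 0) - q A)} with hE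
  have hincl : {ω | ε < (1 / 2) * ∑ z,
      |(1 / (n : ℝ)) * ∑ t ∈ Finset.range n, (if X t ω = z then (1 : ℝ) else 0) - p z|} ⊆
      ⋃ A ∈ (Finset.univ : Finset (Finset Z)), E A := by
    intro ω hω
    simp only [Set.mem_setOf_eq] at hω
    set d : Z → ℝ := fun z =>
      (1 / (n : ℝ)) * ∑ t ∈ Finset.range n, (if X t ω = z then (1 : ℝ) else 0) - p z with hd
    set A : Finset Z := Finset.univ.filter (fun z => p z ≤
      (1 / (n : ℝ)) * ∑ t ∈ Finset.range n, (if X t ω = z then (1 : ℝ) else 0)) with hA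
    -- total sum of d is zero
    have hsum0 : ∑ z, d z = 0 := by
      simp only [hd]
      rw [Finset.sum_sub_distrib, hp1, ← Finset.mul_sum, Finset.sum_comm]
      have : ∀ t ∈ Finset.range n, (∑ z, if X t ω = z then (1:ℝ) else 0) = 1 := by
        intro t _
        rw [Finset.sum_ite_eq]
        simp
      rw [Finset.sum_congr rfl this, Finset.sum_const, Finset.card_range]
      field_simp
      simp
    -- sum over A of d equals half total abs
    have habs : ∑ z ∈ A, d z = (1/2) * ∑ z, |d z| := by
      have hsplit : ∑ z, |d z| = ∑ z ∈ A, |d z| + ∑ z ∈ Finset.univ.filter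
          (fun z => ¬ (p z ≤ (1 / (n : ℝ)) * ∑ t ∈ Finset.range n,
            (if X t ω = z then (1 : ℝ) else 0))), |d z| :=
        (Finset.sum_filter_add_sum_filter_not _ _ _).symm
      have h1 : ∑ z ∈ A, |d z| = ∑ z ∈ A, d z := by
        apply Finset.sum_congr rfl
        intro z hz
        rw [Finset.mem_filter] at hz
        rw [abs_of_nonneg]
        simp only [hd]; linarith [hz.2]
      have h2 : ∑ z ∈ Finset.univ.filter (fun z => ¬ (p z ≤ (1 / (n : ℝ)) *
          ∑ t ∈ Finset.range n, (if X t ω = z then (1 : ℝ) else 0))), |d z| =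
          - ∑ z ∈ Finset.univ.filter (fun z => ¬ (p z ≤ (1 / (n : ℝ)) *
          ∑ t ∈ Finset.range n, (if X t ω = z then (1 : ℝ) else 0))), d z := by
        rw [← Finset.sum_neg_distrib]
        apply Finset.sum_congr rfl
        intro z hz
        rw [Finset.mem_filter] at hz
        push_neg at hz
        rw [abs_of_nonpos]
        simp only [hd]; linarith [hz.2]
      have h3 : ∑ z ∈ A, d z + ∑ z ∈ Finset.univ.filter (fun z => ¬ (p z ≤ (1 / (n : ℝ)) *
          ∑ t ∈ Finset.range n, (if X t ω = z then (1 : ℝ) else 0))), d z = 0 := by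
        rw [Finset.sum_filter_add_sum_filter_not]
        exact hsum0
      rw [hsplit, h1, h2]
      linarith
    -- membership in E A
    refine Set.mem_biUnion (Finset.mem_univ A) ?_
    simp only [hE, Set.mem_setOf_eq]
    have hdA : ε < ∑ z ∈ A, d z := by
      rw [habs]; exact hω
    have hswap : ∑ z ∈ A, d z =
        (1 / (n : ℝ)) * (∑ t ∈ Finset.range n, (if X t ω ∈ A then (1:ℝ) else 0)) - q A := by
      simp only [hd]
      rw [Finset.sum_sub_distrib, ← Finset.mul_sum, Finset.sum_comm]
      congr 1
      congr 1
      apply Finset.sum_congr rfl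
      intro t _
      rw [Finset.sum_ite_eq]
    rw [hswap] at hdA
    set S : ℝ := ∑ t ∈ Finset.range n, (if X t ω ∈ A then (1:ℝ) else 0) with hSdef
    have hsplit2 : ∑ t ∈ Finset.range n, ((if X t ω ∈ A then (1:ℝ) else 0) - q A) =
        S - n * q A := by
      rw [Finset.sum_sub_distrib, Finset.sum_const, Finset.card_range, nsmul_eq_mul]
    rw [hsplit2]
    have h5 := mul_lt_mul_of_pos_left hdA hnR
    have h6 : (n:ℝ) * ((1 / (n : ℝ)) * S - q A) = S - n * q A := by
      field_simp
    linarith [h6 ▸ h5]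
  -- union bound
  have hunion : (μ {ω | ε < (1 / 2) * ∑ z,
      |(1 / (n : ℝ)) * ∑ t ∈ Finset.range n, (if X t ω = z then (1 : ℝ) else 0) - p z|}).toReal
      ≤ ∑ A ∈ (Finset.univ : Finset (Finset Z)), (μ (E A)).toReal := by
    calc (μ _).toReal
        ≤ (μ (⋃ A ∈ (Finset.univ : Finset (Finset Z)), E A)).toReal :=
          ENNReal.toReal_mono (measure_ne_top μ _) (measure_mono hincl)
      _ ≤ (∑ A ∈ (Finset.univ : Finset (Finset Z)), μ (E A)).toReal :=
          ENNReal.toReal_mono (by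
            exact (ENNReal.sum_lt_top.mpr fun A _ => measure_lt_top μ _).ne)
            (measure_biUnion_finset_le _ _)
      _ = ∑ A ∈ (Finset.univ : Finset (Finset Z)), (μ (E A)).toReal :=
          ENNReal.toReal_sum fun A _ => measure_ne_top μ _
  have hterm : ∀ A : Finset Z, (μ (E A)).toReal ≤ Real.exp (-2 * n * ε ^ 2) := by
    intro A
    exact chernoff_set μ n X hmeas hindep A (q A) (hq0 A) (hq1' A) (hlawA A) ε hε
  have htotal : ∑ A ∈ (Finset.univ : Finset (Finset Z)), (μ (E A)).toReal ≤
      2 ^ (Fintype.card Z) * Real.exp (-2 * n * ε ^ 2) := by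
    calc ∑ A ∈ (Finset.univ : Finset (Finset Z)), (μ (E A)).toReal
        ≤ ∑ A ∈ (Finset.univ : Finset (Finset Z)), Real.exp (-2 * n * ε ^ 2) :=
          Finset.sum_le_sum fun A _ => hterm A
      _ = 2 ^ (Fintype.card Z) * Real.exp (-2 * n * ε ^ 2) := by
          rw [Finset.sum_const, Finset.card_univ, Fintype.card_finset, nsmul_eq_mul]
          norm_num
  -- final arithmetic
  have hfinal : (2:ℝ) ^ (Fintype.card Z) * Real.exp (-2 * n * ε ^ 2) ≤ δ := by
    set K : ℝ := (Fintype.card Z : ℝ) with hKdef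
    have hKnn : 0 ≤ K := Nat.cast_nonneg _
    have hlog2 : Real.log 2 ≤ 1 := by
      have := Real.log_le_sub_one_of_pos (by norm_num : (0:ℝ) < 2)
      linarith
    have hlog2pos : 0 < Real.log 2 := Real.log_pos (by norm_num)
    have hlogδ : Real.log δ < 0 := Real.log_neg hδ hδ1
    have hlogdiv : Real.log (2 / δ) = Real.log 2 - Real.log δ :=
      Real.log_div (by norm_num) hδ.ne'
    rw [hlogdiv] at hL
    have hexp : (2:ℝ) ^ (Fintype.card Z) = Real.exp (K * Real.log 2) := by
      rw [Real.exp_nat_mul, Real.exp_log (by norm_num : (0:ℝ) < 2)]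
    rw [hexp, ← Real.exp_add]
    rw [← Real.exp_log hδ]
    apply Real.exp_le_exp.mpr
    have hK' : K * Real.log 2 ≤ n * ε ^ 2 := by nlinarith
    nlinarith
  linarith [hunion, htotal, hfinal]
end

section
/- Let 𝒵 be a finite set, (Z_s)_{s=1}^{T} a sequence in 𝒵, and define N_s(z) = max(1, Σ_{j=1}^s 1{Z_j = z}). Then for any 1 ≤ t < t' ≤ T, Σ_{s=t}^{t'} 1/√(N_{s−1}(Z_s)) ≤ √(8|𝒵|(t'−t)). -/
open Finset

/-- Summing a function of the rank over a finset of naturals equals summing over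
`range card`. -/
lemma rank_sum (A : Finset ℕ) (g : ℕ → ℝ) :
    ∑ a ∈ A, g ((A.filter (· < a)).card) = ∑ k ∈ Finset.range A.card, g k := by
  set r : ℕ → ℕ := fun a => (A.filter (· < a)).card with hr
  have hmem : ∀ a ∈ A, r a ∈ Finset.range A.card := by
    intro a ha
    simp only [Finset.mem_range, hr]
    exact Finset.card_lt_card ⟨Finset.filter_subset _ _,
      fun hsub => (Finset.mem_filter.1 (hsub ha)).2.false⟩
  have hmono : ∀ {a b : ℕ}, a ∈ A → a < b → r a < r b := by
    intro a b ha h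
    apply Finset.card_lt_card
    refine ⟨fun x hx => ?_, fun hsub => ?_⟩
    · rcases Finset.mem_filter.1 hx with ⟨hxA, hxa⟩
      exact Finset.mem_filter.2 ⟨hxA, lt_trans hxa h⟩
    · have := Finset.mem_filter.1 (hsub (Finset.mem_filter.2 ⟨ha, h⟩))
      omega
  have hinj : Set.InjOn r A := by
    intro a ha b hb hab
    by_contra hne
    rcases lt_or_gt_of_ne hne with h | h
    · have := hmono ha h; omega
    · have := hmono hb h; omega
  have himg : A.image r = Finset.range A.card := by
    apply Finset.eq_of_subset_of_card_le
    · intro k hk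
      rcases Finset.mem_image.1 hk with ⟨a, ha, hak⟩
      exact hak ▸ hmem a ha
    · rw [Finset.card_range, Finset.card_image_of_injOn hinj]
  rw [← himg, Finset.sum_image (fun a ha b hb => hinj ha hb)]

lemma sqrt_sum_aux : ∀ n : ℕ,
    ∑ k ∈ Finset.range (n + 1), (1 : ℝ) / Real.sqrt (k + 1) ≤
      2 * Real.sqrt (n + 1) - 1 := by
  intro n
  induction n with
  | zero => norm_num
  | succ n ih =>
    rw [Finset.sum_range_succ]
    have hb : (0:ℝ) < Real.sqrt (n + 2) := Real.sqrt_pos.2 (by positivity)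
    have key : (1 : ℝ) / Real.sqrt ((n + 1 : ℕ) + 1) ≤
        2 * Real.sqrt (n + 2) - 2 * Real.sqrt (n + 1) := by
      rw [div_le_iff₀ (by push_cast; positivity)]
      have h1 : Real.sqrt (n+2) ^ 2 = (n:ℝ) + 2 := Real.sq_sqrt (by positivity)
      have h2 : Real.sqrt (n+1) ^ 2 = (n:ℝ) + 1 := Real.sq_sqrt (by positivity)
      have h3 : (0:ℝ) ≤ Real.sqrt (n+1) := Real.sqrt_nonneg _
      have h4 : ((n + 1 : ℕ) : ℝ) + 1 = (n:ℝ) + 2 := by push_cast; ring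
      rw [h4]
      nlinarith [sq_nonneg (Real.sqrt (n+2) - Real.sqrt (n+1))]
    have h5 : ((n:ℝ) + 1 + 1) = ((n:ℝ) + 2) := by ring
    calc ∑ k ∈ Finset.range (n + 1), (1:ℝ) / Real.sqrt (k + 1)
          + 1 / Real.sqrt ((n + 1 : ℕ) + 1)
        ≤ (2 * Real.sqrt (n + 1) - 1) +
          (2 * Real.sqrt (n + 2) - 2 * Real.sqrt (n + 1)) := add_le_add ih key
      _ = 2 * Real.sqrt (n + 2) - 1 := by ring
      _ = 2 * Real.sqrt (((n+1:ℕ):ℝ) + 1) - 1 := by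
          have : ((n+1:ℕ):ℝ) + 1 = (n:ℝ) + 2 := by push_cast; ring
          rw [this]

lemma sum_inv_sqrt_max (m : ℕ) :
    ∑ k ∈ Finset.range m, (1 : ℝ) / Real.sqrt ((max 1 k : ℕ) : ℝ) ≤
      2 * Real.sqrt m := by
  match m with
  | 0 => simp
  | 1 => norm_num
  | (n + 2) =>
    have : ∑ k ∈ Finset.range (n + 2), (1 : ℝ) / Real.sqrt ((max 1 k : ℕ) : ℝ)
        = (∑ k ∈ Finset.range (n + 1), (1:ℝ) / Real.sqrt (k + 1)) + 1 := by
      rw [Finset.sum_range_succ']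
      congr 1
      · apply Finset.sum_congr rfl
        intro k _
        have hmax : (max 1 (k + 1) : ℕ) = k + 1 := by omega
        rw [hmax]
        push_cast
        ring_nf
      · norm_num
    rw [this]
    have h1 : (∑ k ∈ Finset.range (n + 1), (1:ℝ) / Real.sqrt (k + 1)) + 1 ≤
        2 * Real.sqrt (n + 1) := by
      have := sqrt_sum_aux n
      linarith
    refine h1.trans ?_
    have : ((n:ℝ) + 1) ≤ ((n + 2 : ℕ) : ℝ) := by push_cast; linarith
    have := Real.sqrt_le_sqrt this
    linarith

/-- Accumulated context-count bound: for contexts `Z_s` in a finite set with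
counts `N_s z = max 1 (#{s' ≤ s : Z_{s'} = z})`, the sum of inverse square-root
counts over a window is at most `√(8|𝒵|(t'−t))`. -/
theorem accumulated_contexts {𝒵 : Type*} [Fintype 𝒵] [DecidableEq 𝒵]
    (T : ℕ) (Z : ℕ → 𝒵) (N : ℕ → 𝒵 → ℕ)
    (hN : ∀ s z, N s z = max 1 (∑ j ∈ Finset.Icc 1 s, if Z j = z then 1 else 0))
    (t t' : ℕ) (ht : 1 ≤ t) (htt' : t < t') (ht' : t' ≤ T) :
    ∑ s ∈ Finset.Icc t t', (1 : ℝ) / Real.sqrt (N (s - 1) (Z s)) ≤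
      Real.sqrt (8 * (Fintype.card 𝒵 : ℝ) * ((t' : ℝ) - (t : ℝ))) := by
  classical
  set W : Finset ℕ := Finset.Icc t t' with hW
  set f : ℕ → ℝ := fun s => (1 : ℝ) / Real.sqrt (N (s - 1) (Z s)) with hf
  -- split by fibers
  have hsplit : ∑ s ∈ W, f s = ∑ z : 𝒵, ∑ s ∈ W.filter (fun s => Z s = z), f s :=
    (Finset.sum_fiberwise_of_maps_to (fun s _ => Finset.mem_univ (Z s)) f).symm
  -- per-fiber bound
  have hper : ∀ z : 𝒵, ∑ s ∈ W.filter (fun s => Z s = z), f s ≤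
      2 * Real.sqrt ((W.filter (fun s => Z s = z)).card) := by
    intro z
    set A := W.filter (fun s => Z s = z) with hA
    have hstep : ∀ s ∈ A, f s ≤ (1:ℝ) / Real.sqrt ((max 1 ((A.filter (· < s)).card) : ℕ) : ℝ) := by
      intro s hs
      rcases Finset.mem_filter.1 hs with ⟨hsW, hZs⟩
      rcases Finset.mem_Icc.1 hsW with ⟨hts, hst'⟩
      -- count in Icc 1 (s-1)
      have hcount : (A.filter (· < s)).card ≤
          ∑ j ∈ Finset.Icc 1 (s - 1), if Z j = z then 1 else 0 := by
        rw [← Finset.card_filter]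
        apply Finset.card_le_card
        intro b hb
        rcases Finset.mem_filter.1 hb with ⟨hbA, hbs⟩
        rcases Finset.mem_filter.1 hbA with ⟨hbW, hZb⟩
        rcases Finset.mem_Icc.1 hbW with ⟨htb, _⟩
        exact Finset.mem_filter.2 ⟨Finset.mem_Icc.2 ⟨le_trans ht htb, by omega⟩, hZb⟩
      have hle : (max 1 ((A.filter (· < s)).card) : ℕ) ≤ N (s - 1) (Z s) := by
        rw [hZs, hN]
        omega
      have h1 : (1:ℝ) ≤ ((max 1 ((A.filter (· < s)).card) : ℕ) : ℝ) := by
        have : 1 ≤ (max 1 ((A.filter (· < s)).card) : ℕ) := le_max_left _ _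
        exact_mod_cast this
      have hpos : (0:ℝ) < Real.sqrt ((max 1 ((A.filter (· < s)).card) : ℕ) : ℝ) :=
        Real.sqrt_pos.2 (by linarith)
      apply div_le_div_of_nonneg_left zero_le_one hpos
      exact Real.sqrt_le_sqrt (by exact_mod_cast hle)
    calc ∑ s ∈ A, f s
        ≤ ∑ s ∈ A, (1:ℝ) / Real.sqrt ((max 1 ((A.filter (· < s)).card) : ℕ) : ℝ) :=
          Finset.sum_le_sum hstep
      _ = ∑ k ∈ Finset.range A.card, (1:ℝ) / Real.sqrt ((max 1 k : ℕ) : ℝ) :=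
          rank_sum A (fun k => (1:ℝ) / Real.sqrt ((max 1 k : ℕ) : ℝ))
      _ ≤ 2 * Real.sqrt A.card := sum_inv_sqrt_max A.card
  -- Cauchy-Schwarz
  have hCS : ∑ z : 𝒵, Real.sqrt ((W.filter (fun s => Z s = z)).card) ≤
      Real.sqrt (Fintype.card 𝒵) * Real.sqrt (W.card) := by
    have := Real.sum_sqrt_mul_sqrt_le (f := fun _ : 𝒵 => (1:ℝ))
      (g := fun z : 𝒵 => ((W.filter (fun s => Z s = z)).card : ℝ))
      Finset.univ (fun _ => zero_le_one) (fun z => by positivity)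
    simp only [Real.sqrt_one, one_mul, Finset.sum_const, Finset.card_univ, nsmul_eq_mul,
      mul_one] at this
    have hcard : ∑ z : 𝒵, ((W.filter (fun s => Z s = z)).card : ℝ) = (W.card : ℝ) := by
      rw [← Nat.cast_sum]
      congr 1
      exact (Finset.card_eq_sum_card_fiberwise (fun s _ => Finset.mem_univ (Z s))).symm
    rw [hcard] at this
    exact this
  have hWcard : (W.card : ℝ) = (t' : ℝ) - (t : ℝ) + 1 := by
    rw [hW, Nat.card_Icc]
    have : t' + 1 - t = t' - t + 1 := by omega
    rw [this]
    push_cast [Nat.cast_sub (le_of_lt htt')]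
    ring
  have hfinal : 2 * (Real.sqrt (Fintype.card 𝒵) * Real.sqrt (W.card)) ≤
      Real.sqrt (8 * (Fintype.card 𝒵 : ℝ) * ((t' : ℝ) - (t : ℝ))) := by
    have hK : (0:ℝ) ≤ (Fintype.card 𝒵 : ℝ) := Nat.cast_nonneg _
    have hn : (1:ℝ) ≤ (t' : ℝ) - (t : ℝ) := by
      have : (t:ℝ) + 1 ≤ (t':ℝ) := by exact_mod_cast htt'
      linarith
    rw [← Real.sqrt_mul hK]
    have h4 : (2:ℝ) = Real.sqrt 4 := by
      rw [show (4:ℝ) = 2^2 by norm_num, Real.sqrt_sq (by norm_num)]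
    rw [h4, ← Real.sqrt_mul (by norm_num)]
    apply Real.sqrt_le_sqrt
    rw [hWcard]
    nlinarith
  calc ∑ s ∈ W, f s = ∑ z : 𝒵, ∑ s ∈ W.filter (fun s => Z s = z), f s := hsplit
    _ ≤ ∑ z : 𝒵, 2 * Real.sqrt ((W.filter (fun s => Z s = z)).card) :=
        Finset.sum_le_sum (fun z _ => hper z)
    _ = 2 * ∑ z : 𝒵, Real.sqrt ((W.filter (fun s => Z s = z)).card) := by
        rw [Finset.mul_sum]
    _ ≤ 2 * (Real.sqrt (Fintype.card 𝒵) * Real.sqrt (W.card)) := by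
        have := hCS; linarith
    _ ≤ _ := hfinal
end

section
/- Let ν and ν' be two families of distributions on a measurable space indexed by a finite action set 𝒜, and let π be a (possibly history-dependent) policy over T rounds. Then the KL divergence between the laws of the T-round history (A_t, X_t)_{t∈[T]} generated under (ν, π) and (ν', π) satisfies KL(P_{ν,π} ‖ P_{ν',π}) = Σ_{a∈𝒜} E_{ν,π}[N_T(a)] · KL(ν_a ‖ ν'_a), where N_T(a) is the number of rounds on which action a is played. -/
open Finset

variable {α X : Type*}

/-- Pointwise KL term with the convention that `p = 0` contributes `0`. -/
noncomputable def klTerm (p q : ℝ) : ℝ :=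
  if p = 0 then 0 else p * Real.log (p / q)

/-- KL divergence between two pmfs on a finite set. -/
noncomputable def klPmf [Fintype X] (ν ν' : X → ℝ) : ℝ :=
  ∑ x, klTerm (ν x) (ν' x)

/-- The probability of a `T`-round history `h` under environment `ν` (per-action
observation pmfs) and history-dependent policy `π`. -/
def histProb [Fintype α] [Fintype X] (T : ℕ)
    (π : (t : ℕ) → (Fin t → α × X) → α → ℝ) (ν : α → X → ℝ)
    (h : Fin T → α × X) : ℝ :=
  ∏ t : Fin T,
    π t.1 (fun s : Fin t.1 => h ⟨s.1, s.2.trans t.2⟩) (h t).1 * ν (h t).1 (h t).2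

/-- The number of rounds among the `T`-round history `h` on which action `a` is played. -/
def numPlays [Fintype α] [Fintype X] [DecidableEq α] (T : ℕ)
    (h : Fin T → α × X) (a : α) : ℕ :=
  (Finset.univ.filter fun t : Fin T => (h t).1 = a).card

lemma histProb_snoc [Fintype α] [Fintype X] (T : ℕ)
    (π : (t : ℕ) → (Fin t → α × X) → α → ℝ) (ν : α → X → ℝ)
    (h : Fin T → α × X) (y : α × X) :
    histProb (T + 1) π ν (Fin.snoc h y) =
      histProb T π ν h * (π T h y.1 * ν y.1 y.2) := by
  have key : ∀ (m : ℕ) (hm : m < T + 1) (hm' : m < T),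
      Fin.snoc (α := fun _ : Fin (T + 1) => α × X) h y ⟨m, hm⟩ = h ⟨m, hm'⟩ := by
    intro m hm hm'
    have : (⟨m, hm⟩ : Fin (T + 1)) = Fin.castSucc ⟨m, hm'⟩ := rfl
    rw [this, Fin.snoc_castSucc]
  unfold histProb
  rw [Fin.prod_univ_castSucc]
  congr 1
  · refine Finset.prod_congr rfl fun t _ => ?_
    have h1 : Fin.snoc (α := fun _ : Fin (T + 1) => α × X) h y (Fin.castSucc t) = h t :=
      Fin.snoc_castSucc _ _ _
    have h2 : (fun s : Fin (Fin.castSucc t).1 =>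
        Fin.snoc (α := fun _ : Fin (T + 1) => α × X) h y ⟨s.1, s.2.trans (Fin.castSucc t).2⟩)
        = (fun s : Fin t.1 => h ⟨s.1, s.2.trans t.2⟩) := by
      funext s
      exact key s.1 _ (s.2.trans t.2)
    rw [h1]
    exact congrArg (fun F => π t.1 F (h t).1 * ν (h t).1 (h t).2) h2
  · have h1 : Fin.snoc (α := fun _ : Fin (T + 1) => α × X) h y (Fin.last T) = y :=
      Fin.snoc_last _ _
    have h2 : (fun s : Fin (Fin.last T).1 =>
        Fin.snoc (α := fun _ : Fin (T + 1) => α × X) h y ⟨s.1, s.2.trans (Fin.last T).2⟩) = h := by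
      funext s
      exact key s.1 _ s.2
    rw [h1]
    exact congrArg (fun F => π T F y.1 * ν y.1 y.2) h2

lemma hist_exp_step [Fintype α] [Fintype X] (T : ℕ)
    (π : (t : ℕ) → (Fin t → α × X) → α → ℝ) (ν : α → X → ℝ)
    (hπ1 : ∀ t hist, ∑ a, π t hist a = 1)
    (hν1 : ∀ a, ∑ x, ν a x = 1) (F : α × X → ℝ) :
    ∑ h : Fin (T + 1) → α × X, histProb (T + 1) π ν h * ∑ t, F (h t) =
      (∑ h : Fin T → α × X, histProb T π ν h * ∑ t, F (h t)) +
        ∑ h : Fin T → α × X, histProb T π ν h *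
          ∑ a, π T h a * ∑ x, ν a x * F (a, x) := by
  rw [← Equiv.sum_comp (Fin.snocEquiv (fun _ => α × X))
      (fun h : Fin (T + 1) → α × X => histProb (T + 1) π ν h * ∑ t, F (h t)),
    Fintype.sum_prod_type, Finset.sum_comm, ← Finset.sum_add_distrib]
  refine Finset.sum_congr rfl fun h _ => ?_
  have : ∀ y : α × X,
      histProb (T + 1) π ν (Fin.snocEquiv (fun _ => α × X) (y, h)) *
        ∑ t : Fin (T + 1), F (Fin.snocEquiv (fun _ => α × X) (y, h) t)
      = histProb T π ν h * (π T h y.1 * ν y.1 y.2) *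
        ((∑ t : Fin T, F (h t)) + F y) := by
    intro y
    have e1 : (Fin.snocEquiv (fun _ => α × X) (y, h)) = Fin.snoc h y := rfl
    rw [e1, histProb_snoc, Fin.sum_univ_castSucc]
    simp [Fin.snoc_castSucc, Fin.snoc_last]
  simp only [this]
  rw [Fintype.sum_prod_type]
  have : ∀ a : α, ∑ x, histProb T π ν h * (π T h a * ν a x) *
      ((∑ t : Fin T, F (h t)) + F (a, x))
      = histProb T π ν h * π T h a * (∑ t : Fin T, F (h t)) +
        histProb T π ν h * (π T h a * ∑ x, ν a x * F (a, x)) := by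
    intro a
    have hsum : ∑ x, histProb T π ν h * π T h a * (∑ t : Fin T, F (h t)) * ν a x
        = histProb T π ν h * π T h a * (∑ t : Fin T, F (h t)) := by
      rw [← Finset.mul_sum, hν1, mul_one]
    calc ∑ x, histProb T π ν h * (π T h a * ν a x) *
          ((∑ t : Fin T, F (h t)) + F (a, x))
        = ∑ x, (histProb T π ν h * π T h a * (∑ t : Fin T, F (h t)) * ν a x +
            histProb T π ν h * (π T h a * (ν a x * F (a, x)))) :=
          Finset.sum_congr rfl fun x _ => by ring
      _ = (∑ x, histProb T π ν h * π T h a * (∑ t : Fin T, F (h t)) * ν a x) +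
            ∑ x, histProb T π ν h * (π T h a * (ν a x * F (a, x))) :=
          Finset.sum_add_distrib
      _ = _ := by rw [hsum, ← Finset.mul_sum, ← Finset.mul_sum]
  simp only [this]
  rw [Finset.sum_add_distrib]
  congr 1
  · rw [← Finset.sum_mul, ← Finset.mul_sum, hπ1, mul_one]
  · rw [← Finset.mul_sum]

lemma hist_exp_congr [Fintype α] [Fintype X] (T : ℕ)
    (π : (t : ℕ) → (Fin t → α × X) → α → ℝ) (ν : α → X → ℝ)
    (hπ1 : ∀ t hist, ∑ a, π t hist a = 1)
    (hν1 : ∀ a, ∑ x, ν a x = 1) (F G : α × X → ℝ)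
    (hFG : ∀ a, ∑ x, ν a x * F (a, x) = ∑ x, ν a x * G (a, x)) :
    ∑ h : Fin T → α × X, histProb T π ν h * ∑ t, F (h t) =
      ∑ h : Fin T → α × X, histProb T π ν h * ∑ t, G (h t) := by
  induction T with
  | zero => simp
  | succ T ih =>
    rw [hist_exp_step T π ν hπ1 hν1 F, hist_exp_step T π ν hπ1 hν1 G, ih]
    congr 1
    refine Finset.sum_congr rfl fun h _ => ?_
    congr 1
    exact Finset.sum_congr rfl fun a _ => by rw [hFG a]

/-- Divergence decomposition for bandits (Lemma 15.1 of Lattimore–Szepesvári): the KL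
divergence between the `T`-round history laws under `(ν, π)` and `(ν', π)` equals
`Σ_a E_{ν,π}[N_T(a)] · KL(ν_a ‖ ν'_a)`. -/
theorem divergence_decomposition [Fintype α] [Fintype X] [DecidableEq α]
    (T : ℕ) (π : (t : ℕ) → (Fin t → α × X) → α → ℝ) (ν ν' : α → X → ℝ)
    (hπ0 : ∀ t hist a, 0 ≤ π t hist a) (hπ1 : ∀ t hist, ∑ a, π t hist a = 1)
    (hν0 : ∀ a x, 0 ≤ ν a x) (hν1 : ∀ a, ∑ x, ν a x = 1)
    (hν'0 : ∀ a x, 0 ≤ ν' a x) (hν'1 : ∀ a, ∑ x, ν' a x = 1)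
    (hac : ∀ a x, ν' a x = 0 → ν a x = 0) :
    ∑ h : Fin T → α × X, klTerm (histProb T π ν h) (histProb T π ν' h) =
      ∑ a, (∑ h : Fin T → α × X, histProb T π ν h * (numPlays T h a : ℝ)) *
        klPmf (ν a) (ν' a) := by
  classical
  set f : α × X → ℝ :=
    fun y => if ν y.1 y.2 = 0 then 0 else Real.log (ν y.1 y.2 / ν' y.1 y.2) with hf
  set K : α → ℝ := fun a => klPmf (ν a) (ν' a) with hK
  have g_eq : ∀ a, K a = ∑ x, ν a x * f (a, x) := by
    intro a
    rw [hK]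
    unfold klPmf
    refine Finset.sum_congr rfl fun x _ => ?_
    rw [klTerm, hf]
    by_cases hz : ν a x = 0
    · simp [hz]
    · simp [hz]
  have lhs_eq : ∀ h : Fin T → α × X,
      klTerm (histProb T π ν h) (histProb T π ν' h) =
        histProb T π ν h * ∑ t, f (h t) := by
    intro h
    by_cases hP : histProb T π ν h = 0
    · rw [hP, klTerm]
      simp
    · have hfac : ∀ t : Fin T,
          π t.1 (fun s : Fin t.1 => h ⟨s.1, s.2.trans t.2⟩) (h t).1 *
            ν (h t).1 (h t).2 ≠ 0 := by
        intro t hz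
        exact hP (Finset.prod_eq_zero (Finset.mem_univ t) hz)
      have hνne : ∀ t : Fin T, ν (h t).1 (h t).2 ≠ 0 :=
        fun t => (mul_ne_zero_iff.mp (hfac t)).2
      have hπne : ∀ t : Fin T,
          π t.1 (fun s : Fin t.1 => h ⟨s.1, s.2.trans t.2⟩) (h t).1 ≠ 0 :=
        fun t => (mul_ne_zero_iff.mp (hfac t)).1
      have hν'ne : ∀ t : Fin T, ν' (h t).1 (h t).2 ≠ 0 :=
        fun t hz => hνne t (hac _ _ hz)
      have hQ : histProb T π ν' h ≠ 0 := by
        unfold histProb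
        exact Finset.prod_ne_zero_iff.mpr fun t _ => mul_ne_zero (hπne t) (hν'ne t)
      have hratio : histProb T π ν h / histProb T π ν' h =
          ∏ t : Fin T, ν (h t).1 (h t).2 / ν' (h t).1 (h t).2 := by
        rw [div_eq_iff hQ]
        unfold histProb
        rw [← Finset.prod_mul_distrib]
        refine Finset.prod_congr rfl fun t _ => ?_
        have := hν'ne t
        field_simp
      rw [klTerm, if_neg hP, hratio,
        Real.log_prod (fun t _ => div_ne_zero (hνne t) (hν'ne t))]
      congr 1
      refine Finset.sum_congr rfl fun t _ => ?_
      rw [hf]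
      simp only
      rw [if_neg (hνne t)]
  have rhs_eq : ∑ a, (∑ h : Fin T → α × X,
        histProb T π ν h * (numPlays T h a : ℝ)) * K a =
      ∑ h : Fin T → α × X, histProb T π ν h * ∑ t, K ((h t).1) := by
    have inner : ∀ h : Fin T → α × X,
        ∑ a, (numPlays T h a : ℝ) * K a = ∑ t : Fin T, K ((h t).1) := by
      intro h
      simp only [numPlays, Finset.card_filter]
      push_cast
      calc ∑ a, (∑ t : Fin T, if (h t).1 = a then (1 : ℝ) else 0) * K a
          = ∑ a, ∑ t : Fin T, (if (h t).1 = a then (1 : ℝ) else 0) * K a :=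
            Finset.sum_congr rfl fun a _ => Finset.sum_mul _ _ _
        _ = ∑ t : Fin T, ∑ a, (if (h t).1 = a then (1 : ℝ) else 0) * K a :=
            Finset.sum_comm
        _ = ∑ t : Fin T, K ((h t).1) := by
            refine Finset.sum_congr rfl fun t _ => ?_
            simp [ite_mul]
    calc ∑ a, (∑ h : Fin T → α × X, histProb T π ν h * (numPlays T h a : ℝ)) * K a
        = ∑ a, ∑ h : Fin T → α × X,
            histProb T π ν h * (numPlays T h a : ℝ) * K a :=
          Finset.sum_congr rfl fun a _ => Finset.sum_mul _ _ _
      _ = ∑ h : Fin T → α × X, ∑ a,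
            histProb T π ν h * (numPlays T h a : ℝ) * K a := Finset.sum_comm
      _ = ∑ h : Fin T → α × X, histProb T π ν h * ∑ t : Fin T, K ((h t).1) := by
          refine Finset.sum_congr rfl fun h _ => ?_
          rw [← inner h, Finset.mul_sum]
          exact Finset.sum_congr rfl fun a _ => mul_assoc _ _ _
  calc ∑ h : Fin T → α × X, klTerm (histProb T π ν h) (histProb T π ν' h)
      = ∑ h : Fin T → α × X, histProb T π ν h * ∑ t, f (h t) :=
        Finset.sum_congr rfl fun h _ => lhs_eq h
    _ = ∑ h : Fin T → α × X, histProb T π ν h * ∑ t, K ((h t).1) := by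
        refine hist_exp_congr T π ν hπ1 hν1 f (fun y => K y.1) fun a => ?_
        dsimp only
        rw [← Finset.sum_mul, hν1, one_mul]
        exact (g_eq a).symm
    _ = _ := rhs_eq.symm
end
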